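/- arXiv:1503.08177 — 2 statements merged into one kernel-verified Lean document; each statement's English description precedes it below -/
import Mathlib

section
/- Let a, b, c be real numbers with a > 0, c > 0, and b ≥ 0, and let β ∈ (0, π/2) satisfy b/a ≤ tan β ≤ c/b (interpreting c/b as +∞ when b = 0). Then the coefficients γ₀ = a - b·cot β, γ₁ = b/(cos β · sin β), and γ₂ = c - b·tan β are all nonnegative, and the matrix identity [[a, b], [b, c]] = γ₀·[[1,0],[0,0]] + γ₁·[[cos²β, cos β sin β],[cos β sin β, sin²β]] + γ₂·[[0,0],[0,1]] holds. -/
open Real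

theorem stmt_0 (a b c β : ℝ) (ha : 0 < a) (hc : 0 < c) (hb : 0 ≤ b)
    (hβ1 : 0 < β) (hβ2 : β < π / 2)
    (h1 : b / a ≤ Real.tan β) (h2 : b * Real.tan β ≤ c) :
    0 ≤ a - b * (Real.cos β / Real.sin β) ∧
    0 ≤ b / (Real.cos β * Real.sin β) ∧
    0 ≤ c - b * Real.tan β ∧
    (!![a, b; b, c] : Matrix (Fin 2) (Fin 2) ℝ) =
      (a - b * (Real.cos β / Real.sin β)) • !![1, 0; 0, 0] +
      (b / (Real.cos β * Real.sin β)) •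
        !![Real.cos β ^ 2, Real.cos β * Real.sin β;
           Real.cos β * Real.sin β, Real.sin β ^ 2] +
      (c - b * Real.tan β) • !![0, 0; 0, 1] := by
  have hcos : 0 < Real.cos β := Real.cos_pos_of_mem_Ioo ⟨by linarith [Real.pi_pos], hβ2⟩
  have hsin : 0 < Real.sin β := Real.sin_pos_of_pos_of_lt_pi hβ1 (by linarith [Real.pi_pos])
  have htan : Real.tan β = Real.sin β / Real.cos β := Real.tan_eq_sin_div_cos β
  have h1' : b ≤ a * (Real.sin β / Real.cos β) := by
    rw [htan] at h1
    calc b = (b / a) * a := by field_simp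
    _ ≤ (Real.sin β / Real.cos β) * a := by
        apply mul_le_mul_of_nonneg_right h1 ha.le
    _ = a * (Real.sin β / Real.cos β) := mul_comm _ _
  have g0 : 0 ≤ a - b * (Real.cos β / Real.sin β) := by
    have : b * (Real.cos β / Real.sin β) ≤ a := by
      rw [← mul_div_assoc, div_le_iff₀ hsin]
      rw [← mul_div_assoc, le_div_iff₀ hcos] at h1'
      linarith
    linarith
  refine ⟨g0, by positivity, by linarith [h2], ?_⟩
  ext i j
  have hs := ne_of_gt hsin
  have hc' := ne_of_gt hcos
  fin_cases i <;> fin_cases j <;>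
    simp [Matrix.add_apply, Matrix.smul_apply, htan] <;> field_simp <;> ring
end

section
/- Let a, b, c, γ₀, γ₁, γ₂ : ℝ² → ℝ be C¹ functions and β ∈ ℝ such that at every point [[a,b],[b,c]] = γ₀[[1,0],[0,0]] + γ₁ P_β + γ₂[[0,0],[0,1]], where P_β = [[cos²β, cos β sin β],[cos β sin β, sin²β]]. Then for every C² function u, ∇·([[a,b],[b,c]]∇u) = ∂x(γ₀ ∂x u) + ∂_β(γ₁ ∂_β u) + ∂y(γ₂ ∂y u) pointwise. -/
noncomputable def px (f : ℝ × ℝ → ℝ) : ℝ × ℝ → ℝ := fun p => fderiv ℝ f p (1, 0)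
noncomputable def py (f : ℝ × ℝ → ℝ) : ℝ × ℝ → ℝ := fun p => fderiv ℝ f p (0, 1)
noncomputable def pdir (β : ℝ) (f : ℝ × ℝ → ℝ) : ℝ × ℝ → ℝ :=
  fun p => Real.cos β * px f p + Real.sin β * py f p

private lemma px_add (f g : ℝ × ℝ → ℝ) (p : ℝ × ℝ)
    (hf : DifferentiableAt ℝ f p) (hg : DifferentiableAt ℝ g p) :
    px (fun q => f q + g q) p = px f p + px g p := by
  simp only [px]; rw [fderiv_fun_add hf hg]; rfl

private lemma py_add (f g : ℝ × ℝ → ℝ) (p : ℝ × ℝ)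
    (hf : DifferentiableAt ℝ f p) (hg : DifferentiableAt ℝ g p) :
    py (fun q => f q + g q) p = py f p + py g p := by
  simp only [py]; rw [fderiv_fun_add hf hg]; rfl

private lemma px_cmul (r : ℝ) (f : ℝ × ℝ → ℝ) (p : ℝ × ℝ)
    (hf : DifferentiableAt ℝ f p) :
    px (fun q => r * f q) p = r * px f p := by
  simp only [px]; rw [fderiv_const_mul hf]; rfl

private lemma py_cmul (r : ℝ) (f : ℝ × ℝ → ℝ) (p : ℝ × ℝ)
    (hf : DifferentiableAt ℝ f p) :
    py (fun q => r * f q) p = r * py f p := by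
  simp only [py]; rw [fderiv_const_mul hf]; rfl

theorem stmt_17 (a b c γ₀ γ₁ γ₂ : ℝ × ℝ → ℝ)
    (ha : ContDiff ℝ 1 a) (hb : ContDiff ℝ 1 b) (hc : ContDiff ℝ 1 c)
    (h0 : ContDiff ℝ 1 γ₀) (h1 : ContDiff ℝ 1 γ₁) (h2 : ContDiff ℝ 1 γ₂)
    (β : ℝ)
    (hsplit : ∀ p : ℝ × ℝ,
      (!![a p, b p; b p, c p] : Matrix (Fin 2) (Fin 2) ℝ) =
        γ₀ p • !![1, 0; 0, 0] +
        γ₁ p • !![Real.cos β ^ 2, Real.cos β * Real.sin β;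
                  Real.cos β * Real.sin β, Real.sin β ^ 2] +
        γ₂ p • !![0, 0; 0, 1]) :
    ∀ u : ℝ × ℝ → ℝ, ContDiff ℝ 2 u → ∀ p : ℝ × ℝ,
      px (fun q => a q * px u q + b q * py u q) p +
      py (fun q => b q * px u q + c q * py u q) p =
        px (fun q => γ₀ q * px u q) p +
        pdir β (fun q => γ₁ q * pdir β u q) p +
        py (fun q => γ₂ q * py u q) p := by
  intro u hu p
  set C := Real.cos β with hC
  set S := Real.sin β with hS
  -- pointwise coefficient identities
  have hA : ∀ q, a q = γ₀ q + γ₁ q * C ^ 2 := fun q => by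
    have := congrFun (congrFun (hsplit q) 0) 0
    simpa [Matrix.add_apply, Matrix.smul_apply] using this
  have hB : ∀ q, b q = γ₁ q * (C * S) := fun q => by
    have := congrFun (congrFun (hsplit q) 0) 1
    simpa [Matrix.add_apply, Matrix.smul_apply] using this
  have hCc : ∀ q, c q = γ₁ q * S ^ 2 + γ₂ q := fun q => by
    have := congrFun (congrFun (hsplit q) 1) 1
    simpa [Matrix.add_apply, Matrix.smul_apply] using this
  -- regularity of first derivatives of u
  have hfd : ContDiff ℝ 1 (fderiv ℝ u) := hu.fderiv_right (by norm_num)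
  have hpx : ContDiff ℝ 1 (px u) := hfd.clm_apply contDiff_const
  have hpy : ContDiff ℝ 1 (py u) := hfd.clm_apply contDiff_const
  have d1x : ∀ q, DifferentiableAt ℝ (fun r => γ₀ r * px u r) q := fun q =>
    ((h0.mul hpx).differentiable one_ne_zero) q
  have d2x : ∀ q, DifferentiableAt ℝ (fun r => γ₁ r * px u r) q := fun q =>
    ((h1.mul hpx).differentiable one_ne_zero) q
  have d2y : ∀ q, DifferentiableAt ℝ (fun r => γ₁ r * py u r) q := fun q =>
    ((h1.mul hpy).differentiable one_ne_zero) q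
  have d3y : ∀ q, DifferentiableAt ℝ (fun r => γ₂ r * py u r) q := fun q =>
    ((h2.mul hpy).differentiable one_ne_zero) q
  -- rewrite the LHS inner functions
  have e1 : (fun q => a q * px u q + b q * py u q)
      = fun q => (γ₀ q * px u q) +
          ((C ^ 2 * (γ₁ q * px u q)) + (C * S) * (γ₁ q * py u q)) := by
    funext q; rw [hA q, hB q]; ring
  have e2 : (fun q => b q * px u q + c q * py u q)
      = fun q => ((C * S) * (γ₁ q * px u q) + S ^ 2 * (γ₁ q * py u q)) +
          (γ₂ q * py u q) := by
    funext q; rw [hB q, hCc q]; ring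
  -- rewrite the pdir inner function
  have e3 : (fun q => γ₁ q * pdir β u q)
      = fun q => C * (γ₁ q * px u q) + S * (γ₁ q * py u q) := by
    funext q; simp only [pdir]; ring
  rw [e1, e2, e3]
  simp only [pdir]
  rw [px_add _ _ _ (d1x p) (((d2x p).const_mul _).fun_add ((d2y p).const_mul _)),
    px_add _ _ _ ((d2x p).const_mul _) ((d2y p).const_mul _),
    px_cmul _ _ _ (d2x p), px_cmul _ _ _ (d2y p),
    py_add _ _ _ (((d2x p).const_mul _).fun_add ((d2y p).const_mul _)) (d3y p),
    py_add _ _ _ ((d2x p).const_mul _) ((d2y p).const_mul _),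
    py_cmul _ _ _ (d2x p), py_cmul _ _ _ (d2y p),
    px_add _ _ _ ((d2x p).const_mul _) ((d2y p).const_mul _),
    px_cmul _ _ _ (d2x p), px_cmul _ _ _ (d2y p),
    py_add _ _ _ ((d2x p).const_mul _) ((d2y p).const_mul _),
    py_cmul _ _ _ (d2x p), py_cmul _ _ _ (d2y p)]
  ring
end
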